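/- Let X be a K-convex Banach space and f ∈ L¹_loc(ℝ;X) with f ∈ γ(ℝ;X). Define f_n := ∫_n^{n+1} f(t) dt ∈ X for n ∈ ℤ. Then ‖(f_n)_{n∈ℤ}‖_{ε(ℤ;X)} ≲ ‖f‖_{γ(ℝ;X)}. -/

import Mathlib

set_option autoImplicit false

open MeasureTheory ProbabilityTheory ENNReal Set Filter

noncomputable section

universe u v w

/-- Finite Rademacher average: the mean over all sign choices of the norm of the signed sum. -/
def radAvgF {ι X : Type*} [Fintype ι] [DecidableEq ι] [NormedAddCommGroup X]
    (x : ι → X) : ℝ :=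
  (∑ ε : ι → Bool, ‖∑ n, (if ε n then x n else -x n)‖) / 2 ^ (Fintype.card ι)

/-- Rademacher norm of a family: supremum of the finite Rademacher averages over
finite subfamilies. -/
def radNorm {ι X : Type*} [DecidableEq ι] [NormedAddCommGroup X] (x : ι → X) : ℝ≥0∞ :=
  ⨆ s : Finset ι, ENNReal.ofReal (radAvgF (fun n : {a // a ∈ s} => x n.1))

/-- Product of standard Gaussian measures on `Fin N → ℝ`. -/
def gaussPi (N : ℕ) : Measure (Fin N → ℝ) := Measure.pi fun _ => gaussianReal 0 1

/-- The γ-(summing) norm of the Pettis integral operator associated with `f : S → X`: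
the supremum, over finite orthonormal systems `g` in `L²(μ)`, of the square root of the
second Gaussian moment of `∑ γₙ • ∫ gₙ f dμ`. -/
def gammaNorm {S X : Type*} [MeasurableSpace S] [NormedAddCommGroup X] [NormedSpace ℝ X]
    (μ : Measure S) (f : S → X) : ℝ≥0∞ :=
  ⨆ (N : ℕ) (g : Fin N → S → ℝ)
      (_ : ∀ n m : Fin N, (∫ s, g n s * g m s ∂μ) = if n = m then 1 else 0),
    ENNReal.ofReal (Real.sqrt (∫ ω, ‖∑ n, ω n • (∫ s, g n s • f s ∂μ)‖ ^ 2 ∂(gaussPi N)))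

/-- `f` belongs to `γ(S;X)`: the Pettis integral operator of `f` is approximable in the
γ-norm by finite-rank kernel operators with `L²` kernels. -/
def MemGamma {S X : Type*} [MeasurableSpace S] [NormedAddCommGroup X] [NormedSpace ℝ X]
    (μ : Measure S) (f : S → X) : Prop :=
  ∀ ε : ℝ≥0∞, 0 < ε → ∃ (N : ℕ) (g : Fin N → S → ℝ) (x : Fin N → X),
    (∀ n, MemLp (g n) 2 μ) ∧
    gammaNorm μ (fun s => f s - ∑ n, g n s • x n) ≤ ε

/-- A Banach space is K-convex: Rademacher averages are computed, up to a constant,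
by duality against Rademacher-normalized sequences of functionals. -/
def KConvex (X : Type*) [NormedAddCommGroup X] [NormedSpace ℝ X] : Prop :=
  ∃ C : ℝ, 0 < C ∧ ∀ (N : ℕ) (x : Fin N → X) (r : ℝ),
    (∀ φ : Fin N → (X →L[ℝ] ℝ), radAvgF φ ≤ 1 → |∑ n, φ n (x n)| ≤ r) →
    radAvgF x ≤ C * r





lemma integrable_sq_gaussian : Integrable (fun x : ℝ => x ^ 2) (gaussianReal 0 1) := by
  rw [gaussianReal_of_var_ne_zero 0 one_ne_zero,
    integrable_withDensity_iff (measurable_gaussianPDF 0 1)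
      (Filter.Eventually.of_forall fun x => ENNReal.ofReal_lt_top)]
  have hto : ∀ x : ℝ, ((gaussianPDF 0 1 x).toReal) = gaussianPDFReal 0 1 x := fun x =>
    ENNReal.toReal_ofReal (gaussianPDFReal_nonneg 0 1 x)
  simp only [hto]
  have h := (integrable_rpow_mul_exp_neg_mul_sq (b := 1/2) (by norm_num)
      (s := 2) (by norm_num)).const_mul (Real.sqrt (2 * Real.pi))⁻¹
  refine h.congr (Filter.Eventually.of_forall fun x => ?_)
  have h2 : (x : ℝ) ^ (2:ℝ) = x ^ 2 := by
    rw [show (2:ℝ) = ((2:ℕ):ℝ) by norm_num, Real.rpow_natCast]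
  simp only [gaussianPDFReal, h2]
  push_cast
  rw [mul_one, sub_zero]
  ring_nf

lemma integrable_abs_gaussian : Integrable (fun x : ℝ => |x|) (gaussianReal 0 1) := by
  have h1 : Integrable (fun x : ℝ => 1 + x ^ 2) (gaussianReal 0 1) :=
    (integrable_const 1).add integrable_sq_gaussian
  refine h1.mono' (measurable_abs.aestronglyMeasurable) (Filter.Eventually.of_forall fun x => ?_)
  rw [Real.norm_eq_abs, abs_abs]
  nlinarith [sq_nonneg (|x| - 1), sq_abs x]

lemma abs_gaussian_pos : 0 < ∫ x, |x| ∂(gaussianReal 0 1) := by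
  rw [integral_pos_iff_support_of_nonneg (fun x => abs_nonneg x) integrable_abs_gaussian]
  have hsupp : Function.support (fun x : ℝ => |x|) = {(0:ℝ)}ᶜ := by
    ext x; simp [Function.support, abs_ne_zero]
  rw [hsupp]
  have h0 : (gaussianReal 0 1) {(0:ℝ)} = 0 :=
    gaussianReal_absolutelyContinuous 0 one_ne_zero (measure_singleton 0)
  have := measure_compl (μ := gaussianReal 0 1) (s := {(0:ℝ)}) (measurableSet_singleton 0)
    (by simp)
  rw [this, h0, measure_univ]
  simp


instance gaussPi_prob (N : ℕ) : IsProbabilityMeasure (gaussPi N) := by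
  unfold gaussPi; infer_instance

def sgnb (b : Bool) : ℝ := if b then 1 else -1

lemma measurePreserving_eval_gaussPi (N : ℕ) (n : Fin N) :
    MeasurePreserving (fun ω : Fin N → ℝ => ω n) (gaussPi N) (gaussianReal 0 1) := by
  refine ⟨measurable_pi_apply n, ?_⟩
  refine Measure.ext fun t ht => ?_
  rw [Measure.map_apply (measurable_pi_apply n) ht]
  have hpre : (fun ω : Fin N → ℝ => ω n) ⁻¹' t
      = Set.pi Set.univ (Function.update (fun _ : Fin N => Set.univ) n t) := by
    rw [← Set.eval_preimage]
  rw [hpre, gaussPi, Measure.pi_pi]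
  rw [Finset.prod_eq_single n (fun m _ hm => by simp [Function.update_of_ne hm])
    (by simp)]
  simp

lemma measurePreserving_sgnb_mul (b : Bool) :
    MeasurePreserving (fun t : ℝ => sgnb b * t) (gaussianReal 0 1) (gaussianReal 0 1) := by
  refine ⟨measurable_id.const_mul _, ?_⟩
  have := gaussianReal_map_const_mul (μ := 0) (v := 1) (sgnb b)
  rw [show ((sgnb b) * ·) = (fun t : ℝ => sgnb b * t) from rfl] at this
  rw [this, mul_zero]
  congr 1
  cases b <;> · refine NNReal.coe_injective ?_; simp [sgnb]

lemma measurePreserving_flip (N : ℕ) (ε : Fin N → Bool) :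
    MeasurePreserving (fun (ω : Fin N → ℝ) (n : Fin N) => sgnb (ε n) * ω n)
      (gaussPi N) (gaussPi N) :=
  measurePreserving_pi _ _ (fun n => measurePreserving_sgnb_mul (ε n))


section Key
variable {X : Type*} [NormedAddCommGroup X] [NormedSpace ℝ X] [CompleteSpace X]

lemma sgnb_abs (b : Bool) : |sgnb b| = 1 := by cases b <;> simp [sgnb]

lemma key_ineq (N : ℕ) (x : Fin N → X) :
    (∑ ε : Fin N → Bool, ‖∑ n, (if ε n then x n else -x n)‖) / 2 ^ N ≤
      (∫ t, |t| ∂(gaussianReal 0 1))⁻¹ *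
        Real.sqrt (∫ ω, ‖∑ n, ω n • x n‖ ^ 2 ∂(gaussPi N)) := by
  classical
  set P := gaussPi N with hP
  set κ := ∫ t, |t| ∂(gaussianReal 0 1) with hκdef
  have hκpos : 0 < κ := abs_gaussian_pos
  have hev : ∀ n : Fin N, MeasurePreserving (fun ω : Fin N → ℝ => ω n) P (gaussianReal 0 1) :=
    measurePreserving_eval_gaussPi N
  have hcoord : ∀ n : Fin N, Integrable (fun ω : Fin N → ℝ => |ω n|) P := fun n =>
    ((hev n).integrable_comp measurable_abs.aestronglyMeasurable).2 integrable_abs_gaussian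
  have hcoordint : ∀ n : Fin N, ∫ ω, |ω n| ∂P = κ := by
    intro n
    rw [hκdef, ← (hev n).map_eq,
      integral_map (hev n).measurable.aemeasurable measurable_abs.aestronglyMeasurable]
  -- Memℒp of the Gaussian sum
  have hg2 : MemLp (fun t : ℝ => t) 2 (gaussianReal 0 1) :=
    (memLp_two_iff_integrable_sq measurable_id.aestronglyMeasurable).2
      (by simpa using integrable_sq_gaussian)
  have hcoord2 : ∀ n : Fin N, MemLp (fun ω : Fin N → ℝ => ω n) 2 P := by
    intro n
    have := (memLp_map_measure_iff (g := fun t : ℝ => t) (f := fun ω : Fin N → ℝ => ω n)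
      measurable_id.aestronglyMeasurable (hev n).measurable.aemeasurable).1
      (by rw [(hev n).map_eq]; exact hg2)
    exact this
  have hSmem : MemLp (fun ω : Fin N → ℝ => ∑ n, ω n • x n) 2 P := by
    have h : ∀ n : Fin N, MemLp (fun ω : Fin N → ℝ => ω n • x n) 2 P := fun n =>
      MemLp.smul (p := 2) (q := ∞) (r := 2) (memLp_top_const (x n)) (hcoord2 n)
    have h2 := memLp_finset_sum' Finset.univ (fun n (_ : n ∈ Finset.univ) => h n)
    rwa [show (∑ n : Fin N, fun ω : Fin N → ℝ => ω n • x n)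
      = fun ω : Fin N → ℝ => ∑ n, ω n • x n from funext fun ω => by
        simp [Finset.sum_apply]] at h2
  have hGcont : Continuous (fun ω : Fin N → ℝ => ‖∑ n, ω n • x n‖) :=
    (continuous_finset_sum _ fun n _ => (continuous_apply n).smul continuous_const).norm
  have hG2int : Integrable (fun ω : Fin N → ℝ => ‖∑ n, ω n • x n‖ ^ 2) P :=
    (memLp_two_iff_integrable_sq_norm hSmem.1).1 hSmem
  have hGint : Integrable (fun ω : Fin N → ℝ => ‖∑ n, ω n • x n‖) P :=
    (hSmem.integrable one_le_two).norm
  -- domination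
  have hB : Integrable (fun ω : Fin N → ℝ => ∑ n, |ω n| * ‖x n‖) P :=
    integrable_finset_sum _ fun n _ => (hcoord n).mul_const _
  have hdom : ∀ (c : Fin N → ℝ), (∀ n, |c n| ≤ 1) → ∀ ω : Fin N → ℝ,
      ‖∑ n, (c n * ω n) • x n‖ ≤ ∑ n, |ω n| * ‖x n‖ := by
    intro c hc ω
    refine (norm_sum_le _ _).trans (Finset.sum_le_sum fun n _ => ?_)
    rw [norm_smul, Real.norm_eq_abs, abs_mul]
    calc |c n| * |ω n| * ‖x n‖ ≤ 1 * |ω n| * ‖x n‖ := by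
          exact mul_le_mul_of_nonneg_right
            (mul_le_mul_of_nonneg_right (hc n) (abs_nonneg _)) (norm_nonneg _)
      _ = |ω n| * ‖x n‖ := by ring
  have hintc : ∀ (c : Fin N → ℝ), (∀ n, |c n| ≤ 1) →
      Integrable (fun ω : Fin N → ℝ => ‖∑ n, (c n * ω n) • x n‖) P := by
    intro c hc
    refine hB.mono' ?_ (Filter.Eventually.of_forall fun ω => ?_)
    · exact ((continuous_finset_sum _ fun n _ =>
        ((continuous_const.mul (continuous_apply n)).smul
          continuous_const)).norm).aestronglyMeasurable
    · rw [Real.norm_eq_abs, abs_of_nonneg (norm_nonneg _)]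
      exact hdom c hc ω
  have hintabs : ∀ (ε : Fin N → Bool),
      Integrable (fun ω : Fin N → ℝ => ‖∑ n, (sgnb (ε n) * |ω n|) • x n‖) P := by
    intro ε
    refine hB.mono' ?_ (Filter.Eventually.of_forall fun ω => ?_)
    · exact ((continuous_finset_sum _ fun n _ =>
        ((continuous_const.mul (continuous_apply n).abs).smul
          continuous_const)).norm).aestronglyMeasurable
    · rw [Real.norm_eq_abs, abs_of_nonneg (norm_nonneg _)]
      have := hdom (fun n => sgnb (ε n)) (fun n => le_of_eq (sgnb_abs _)) (fun n => |ω n|)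
      simpa [abs_abs] using this
  -- Step 1 : κ * ‖∑ sgnb ε • x‖ ≤ ∫ ‖∑ (sgnb ε * |ω|) • x‖
  have key1 : ∀ ε : Fin N → Bool, κ * ‖∑ n, sgnb (ε n) • x n‖ ≤
      ∫ ω, ‖∑ n, (sgnb (ε n) * |ω n|) • x n‖ ∂P := by
    intro ε
    have h1 : ∫ ω, (∑ n, (sgnb (ε n) * |ω n|) • x n) ∂P = κ • ∑ n, sgnb (ε n) • x n := by
      rw [integral_finset_sum _ (fun n _ => ((hcoord n).const_mul _).smul_const _)]
      rw [Finset.smul_sum]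
      refine Finset.sum_congr rfl fun n _ => ?_
      rw [integral_smul_const, integral_const_mul, hcoordint n, mul_comm, mul_smul]
    calc κ * ‖∑ n, sgnb (ε n) • x n‖ = ‖κ • ∑ n, sgnb (ε n) • x n‖ := by
          rw [norm_smul, Real.norm_eq_abs, abs_of_pos hκpos]
      _ = ‖∫ ω, (∑ n, (sgnb (ε n) * |ω n|) • x n) ∂P‖ := by rw [h1]
      _ ≤ ∫ ω, ‖∑ n, (sgnb (ε n) * |ω n|) • x n‖ ∂P := norm_integral_le_integral_norm _
  -- Step 2 : pointwise sign-reindexing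
  have key3 : ∀ ω : Fin N → ℝ,
      ∑ ε : Fin N → Bool, ‖∑ n, (sgnb (ε n) * |ω n|) • x n‖
        = ∑ ε : Fin N → Bool, ‖∑ n, (sgnb (ε n) * ω n) • x n‖ := by
    intro ω
    set σ : (Fin N → Bool) → (Fin N → Bool) := fun ε n => if ω n < 0 then !(ε n) else ε n
      with hσdef
    have hσinv : Function.Involutive σ := by
      intro ε; funext n; simp only [hσdef]; by_cases h : ω n < 0 <;> simp [h]
    refine Fintype.sum_bijective σ hσinv.bijective _ _ fun ε => ?_
    congr 1
    refine Finset.sum_congr rfl fun n _ => ?_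
    have : sgnb (σ ε n) * ω n = sgnb (ε n) * |ω n| := by
      by_cases h : ω n < 0
      · rw [abs_of_neg h]
        simp only [hσdef, if_pos h]
        cases ε n <;> simp [sgnb] <;> ring
      · rw [abs_of_nonneg (not_lt.1 h)]
        simp only [hσdef, if_neg h]
    rw [this]
  -- Step 3 : measure-preserving flips
  have key2 : ∀ ε : Fin N → Bool, ∫ ω, ‖∑ n, (sgnb (ε n) * ω n) • x n‖ ∂P
      = ∫ ω, ‖∑ n, ω n • x n‖ ∂P := by
    intro ε
    have hT := measurePreserving_flip N ε
    have := integral_map (μ := P) hT.measurable.aemeasurable hGcont.aestronglyMeasurable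
    rw [hT.map_eq] at this
    exact this.symm
  -- Combine
  have big : κ * (∑ ε : Fin N → Bool, ‖∑ n, (if ε n then x n else -x n)‖)
      ≤ 2 ^ N * ∫ ω, ‖∑ n, ω n • x n‖ ∂P := by
    have hif : ∀ (ε : Fin N → Bool) (n : Fin N),
        (if ε n then x n else -x n) = sgnb (ε n) • x n := by
      intro ε n; cases ε n <;> simp [sgnb]
    calc κ * (∑ ε : Fin N → Bool, ‖∑ n, (if ε n then x n else -x n)‖)
        = ∑ ε : Fin N → Bool, κ * ‖∑ n, sgnb (ε n) • x n‖ := by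
          rw [Finset.mul_sum]
          exact Finset.sum_congr rfl fun ε _ => by
            congr 2; exact Finset.sum_congr rfl fun n _ => hif ε n
      _ ≤ ∑ ε : Fin N → Bool, ∫ ω, ‖∑ n, (sgnb (ε n) * |ω n|) • x n‖ ∂P :=
          Finset.sum_le_sum fun ε _ => key1 ε
      _ = ∫ ω, ∑ ε : Fin N → Bool, ‖∑ n, (sgnb (ε n) * |ω n|) • x n‖ ∂P :=
          (integral_finset_sum _ fun ε _ => hintabs ε).symm
      _ = ∫ ω, ∑ ε : Fin N → Bool, ‖∑ n, (sgnb (ε n) * ω n) • x n‖ ∂P :=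
          integral_congr_ae (Filter.Eventually.of_forall fun ω => key3 ω)
      _ = ∑ ε : Fin N → Bool, ∫ ω, ‖∑ n, (sgnb (ε n) * ω n) • x n‖ ∂P :=
          integral_finset_sum _ fun ε _ =>
            hintc (fun n => sgnb (ε n)) (fun n => le_of_eq (sgnb_abs _))
      _ = ∑ _ε : Fin N → Bool, ∫ ω, ‖∑ n, ω n • x n‖ ∂P :=
          Finset.sum_congr rfl fun ε _ => key2 ε
      _ = 2 ^ N * ∫ ω, ‖∑ n, ω n • x n‖ ∂P := by
          rw [Finset.sum_const, Finset.card_univ]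
          simp [Fintype.card_fun]
  -- Cauchy-Schwarz : ∫‖S‖ ≤ sqrt ∫‖S‖²
  have hCS : ∫ ω, ‖∑ n, ω n • x n‖ ∂P ≤
      Real.sqrt (∫ ω, ‖∑ n, ω n • x n‖ ^ 2 ∂P) := by
    set m := ∫ ω, ‖∑ n, ω n • x n‖ ∂P with hm
    have hmnn : 0 ≤ m := integral_nonneg fun ω => norm_nonneg _
    have hsq : m ^ 2 ≤ ∫ ω, ‖∑ n, ω n • x n‖ ^ 2 ∂P := by
      have h0 : 0 ≤ ∫ ω, (‖∑ n, ω n • x n‖ - m) ^ 2 ∂P :=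
        integral_nonneg fun ω => sq_nonneg _
      have hexp : (fun ω : Fin N → ℝ => (‖∑ n, ω n • x n‖ - m) ^ 2)
          = fun ω => ‖∑ n, ω n • x n‖ ^ 2 - (2 * m) * ‖∑ n, ω n • x n‖ + m ^ 2 := by
        funext ω; ring
      rw [hexp] at h0
      have i2 : Integrable (fun ω : Fin N → ℝ => (2 * m) * ‖∑ n, ω n • x n‖) P :=
        hGint.const_mul _
      have i1 : Integrable
          (fun ω : Fin N → ℝ => ‖∑ n, ω n • x n‖ ^ 2 - (2 * m) * ‖∑ n, ω n • x n‖) P :=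
        hG2int.sub i2
      rw [integral_add i1 (integrable_const _), integral_sub hG2int i2,
        integral_const_mul, integral_const] at h0
      simp only [measure_univ, probReal_univ, ENNReal.toReal_one, smul_eq_mul, one_mul] at h0
      rw [← hm] at h0
      nlinarith
    have := Real.sqrt_le_sqrt hsq
    rwa [Real.sqrt_sq hmnn] at this
  -- finish
  have h2N : (0:ℝ) < 2 ^ N := by positivity
  rw [div_le_iff₀ h2N]
  have hfinal : κ * ((∑ ε : Fin N → Bool, ‖∑ n, (if ε n then x n else -x n)‖))
      ≤ κ * ((κ⁻¹ * Real.sqrt (∫ ω, ‖∑ n, ω n • x n‖ ^ 2 ∂P)) * 2 ^ N) := by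
    have : κ * ((κ⁻¹ * Real.sqrt (∫ ω, ‖∑ n, ω n • x n‖ ^ 2 ∂P)) * 2 ^ N)
        = 2 ^ N * Real.sqrt (∫ ω, ‖∑ n, ω n • x n‖ ^ 2 ∂P) := by
      field_simp
    rw [this]
    refine big.trans ?_
    have := mul_le_mul_of_nonneg_left hCS (le_of_lt h2N)
    linarith
  exact le_of_mul_le_mul_left hfinal hκpos

end Key

section Reindex

lemma radAvgF_comp_equiv {ι ι' X : Type*} [Fintype ι] [Fintype ι'] [DecidableEq ι]
    [DecidableEq ι'] [NormedAddCommGroup X] (e : ι ≃ ι') (x : ι' → X) :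
    radAvgF (fun i => x (e i)) = radAvgF x := by
  unfold radAvgF
  rw [Fintype.card_congr e]
  congr 1
  refine Fintype.sum_equiv (Equiv.arrowCongr e (Equiv.refl Bool)) _ _ fun ε => ?_
  congr 1
  refine Fintype.sum_equiv e _ _ fun i => ?_
  simp [Equiv.arrowCongr]

end Reindex

theorem statement6 {X : Type*} [NormedAddCommGroup X] [NormedSpace ℝ X] [CompleteSpace X]
    (hK : KConvex X) :
    ∃ c : ℝ≥0∞, c ≠ ⊤ ∧
      ∀ f : ℝ → X, LocallyIntegrable f volume → MemGamma volume f →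
        radNorm (fun n : ℤ => ∫ t in Set.Ioc (n : ℝ) ((n : ℝ) + 1), f t) ≤
          c * gammaNorm volume f := by
  classical
  refine ⟨ENNReal.ofReal (∫ t, |t| ∂(gaussianReal 0 1))⁻¹, ENNReal.ofReal_ne_top, ?_⟩
  intro f _hloc _hmem
  set F : ℤ → X := fun n => ∫ t in Set.Ioc (n : ℝ) ((n : ℝ) + 1), f t with hF
  rw [radNorm]
  refine iSup_le fun s => ?_
  set N := s.card with hN
  set e : Fin N ≃ {a // a ∈ s} := s.equivFin.symm with he
  set a : Fin N → ℤ := fun k => (e k : ℤ) with ha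
  have ha_inj : Function.Injective a := fun k l h => e.injective (Subtype.ext h)
  set g : Fin N → ℝ → ℝ :=
    fun k => (Set.Ioc ((a k : ℤ) : ℝ) (((a k : ℤ) : ℝ) + 1)).indicator (fun _ => 1) with hg
  -- orthonormality
  have horth : ∀ n m : Fin N, (∫ t, g n t * g m t) = if n = m then 1 else 0 := by
    intro n m
    by_cases h : n = m
    · subst h
      rw [if_pos rfl]
      have hp : (fun t => g n t * g n t)
          = (Set.Ioc ((a n : ℤ) : ℝ) (((a n : ℤ) : ℝ) + 1)).indicator (fun _ => 1) := by
        funext t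
        by_cases ht : t ∈ Set.Ioc ((a n : ℤ) : ℝ) (((a n : ℤ) : ℝ) + 1) <;>
          simp [hg, Set.indicator_apply, ht]
      rw [hp, show ((Set.Ioc ((a n : ℤ) : ℝ) (((a n : ℤ) : ℝ) + 1)).indicator
          (fun _ => (1:ℝ))) = Set.indicator _ 1 from rfl,
        integral_indicator_one measurableSet_Ioc]
      simp [Real.volume_Ioc]
    · rw [if_neg h]
      have hzero : ∀ t : ℝ, g n t * g m t = 0 := by
        intro t
        by_cases h1 : t ∈ Set.Ioc ((a n : ℤ) : ℝ) (((a n : ℤ) : ℝ) + 1)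
        · by_cases h2 : t ∈ Set.Ioc ((a m : ℤ) : ℝ) (((a m : ℤ) : ℝ) + 1)
          · exfalso
            obtain ⟨h1a, h1b⟩ := h1
            obtain ⟨h2a, h2b⟩ := h2
            have hnm : a n ≠ a m := fun hh => h (ha_inj hh)
            rcases lt_or_gt_of_ne hnm with hlt | hlt
            · have : ((a n : ℤ) : ℝ) + 1 ≤ ((a m : ℤ) : ℝ) := by
                have : a n + 1 ≤ a m := Int.add_one_le_iff.mpr hlt
                exact_mod_cast this
              linarith
            · have : ((a m : ℤ) : ℝ) + 1 ≤ ((a n : ℤ) : ℝ) := by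
                have : a m + 1 ≤ a n := Int.add_one_le_iff.mpr hlt
                exact_mod_cast this
              linarith
          · simp [hg, Set.indicator_apply, h2]
        · simp [hg, Set.indicator_apply, h1]
      simp [hzero]
  -- the Pettis integrals are the averages
  have hx : ∀ k : Fin N, (∫ t, g k t • f t) = F (a k) := by
    intro k
    have hp : (fun t => g k t • f t)
        = (Set.Ioc ((a k : ℤ) : ℝ) (((a k : ℤ) : ℝ) + 1)).indicator f := by
      funext t
      by_cases ht : t ∈ Set.Ioc ((a k : ℤ) : ℝ) (((a k : ℤ) : ℝ) + 1) <;>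
        simp [hg, Set.indicator_apply, ht]
    rw [hp, integral_indicator measurableSet_Ioc]
  -- key inequality
  have hkey := key_ineq N (fun k => F (a k))
  have hA : radAvgF (fun n : {b // b ∈ s} => F n.1) = radAvgF (fun k : Fin N => F (a k)) := by
    have := radAvgF_comp_equiv e (fun n : {b // b ∈ s} => F n.1)
    exact this.symm
  have hrad : radAvgF (fun n : {b // b ∈ s} => F n.1)
      = (∑ ε : Fin N → Bool, ‖∑ n, (if ε n then F (a n) else -F (a n))‖) / 2 ^ N := by
    rw [hA]
    unfold radAvgF
    simp
  -- gammaNorm lower bound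
  have hgn : ENNReal.ofReal (Real.sqrt
        (∫ ω, ‖∑ n, ω n • (∫ t, g n t • f t)‖ ^ 2 ∂(gaussPi N)))
      ≤ gammaNorm volume f := by
    unfold gammaNorm
    exact le_iSup_of_le N (le_iSup_of_le g (le_iSup_of_le horth le_rfl))
  have hsqeq : (∫ ω, ‖∑ n, ω n • (∫ t, g n t • f t)‖ ^ 2 ∂(gaussPi N))
      = ∫ ω, ‖∑ n, ω n • F (a n)‖ ^ 2 ∂(gaussPi N) := by
    congr 1
    funext ω
    congr 2
    exact Finset.sum_congr rfl fun n _ => by rw [hx n]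
  calc ENNReal.ofReal (radAvgF (fun n : {b // b ∈ s} => F n.1))
      ≤ ENNReal.ofReal ((∫ t, |t| ∂(gaussianReal 0 1))⁻¹ *
          Real.sqrt (∫ ω, ‖∑ n, ω n • F (a n)‖ ^ 2 ∂(gaussPi N))) := by
        refine ENNReal.ofReal_le_ofReal ?_
        rw [hrad]
        exact hkey
    _ = ENNReal.ofReal (∫ t, |t| ∂(gaussianReal 0 1))⁻¹ *
          ENNReal.ofReal (Real.sqrt (∫ ω, ‖∑ n, ω n • F (a n)‖ ^ 2 ∂(gaussPi N))) := by
        rw [ENNReal.ofReal_mul (by positivity)]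
    _ ≤ ENNReal.ofReal (∫ t, |t| ∂(gaussianReal 0 1))⁻¹ * gammaNorm volume f := by
        refine mul_le_mul_right ?_ _
        rw [← hsqeq]
        exact hgn
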